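/- arXiv:1611.02410 — 4 statements merged into one kernel-verified Lean document; each statement's English description precedes it below -/
import Mathlib

section
/- Let S be a nonempty convex subset of a real vector space, φ : S → ℝ convex, and C ⊆ S a convex set symmetric with respect to a point p ∈ C such that φ restricted to C is bounded above. Let μ denote the Minkowski functional of C − p and M := sup_{x ∈ C} (φ(x) − φ(p)). Then for all ε ∈ (0,1) and all u, v ∈ ε(C − p) + p, |φ(u) − φ(v)| ≤ M · (1+ε)/(1−ε) · μ(u − v). -/
open Pointwise

variable {X : Type*} [AddCommGroup X] [Module ℝ X]

private lemma one_sided (S : Set X) (hS : Convex ℝ S)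
    (φ : X → ℝ) (hφ : ConvexOn ℝ S φ)
    (C : Set X) (hCS : C ⊆ S) (hC : Convex ℝ C) (p : X) (hp : p ∈ C)
    (hsym : C - {p} = -(C - {p}))
    (M : ℝ) (hM : ∀ x ∈ C, φ x - φ p ≤ M)
    (ε : ℝ) (hε0 : 0 < ε) (hε1 : ε < 1)
    (u v : X) (hu : u - p ∈ ε • (C - {p})) (hv : v - p ∈ ε • (C - {p})) :
    φ u - φ v ≤ M * ((1 + ε) / (1 - ε)) * gauge (C - {p}) (u - v) := by
  have hM0 : 0 ≤ M := by have := hM p hp; linarith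
  have h1ε : (0:ℝ) < 1 - ε := by linarith
  -- extract c₁, c₂
  obtain ⟨w₁, hw₁, hw₁e⟩ := hu
  obtain ⟨w₂, hw₂, hw₂e⟩ := hv
  obtain ⟨c₁, hc₁, rfl⟩ : ∃ c ∈ C, c - p = w₁ := by
    rw [Set.sub_singleton] at hw₁; obtain ⟨c, hc, rfl⟩ := hw₁; exact ⟨c, hc, rfl⟩
  obtain ⟨c₂, hc₂, rfl⟩ : ∃ c ∈ C, c - p = w₂ := by
    rw [Set.sub_singleton] at hw₂; obtain ⟨c, hc, rfl⟩ := hw₂; exact ⟨c, hc, rfl⟩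
  have hw₁e' : ε • (c₁ - p) = u - p := hw₁e
  have hw₂e' : ε • (c₂ - p) = v - p := hw₂e
  have hu' : u = p + ε • (c₁ - p) := by rw [hw₁e']; abel
  have hv' : v = p + ε • (c₂ - p) := by rw [hw₂e']; abel
  -- symmetric point of c₂
  have hneg : -(c₂ - p) ∈ C - {p} := by
    rw [hsym]
    exact Set.neg_mem_neg.mpr (by rw [Set.sub_singleton]; exact ⟨c₂, hc₂, rfl⟩)
  obtain ⟨c₂', hc₂', hc₂'e⟩ : ∃ c ∈ C, c - p = -(c₂ - p) := by
    rw [Set.sub_singleton] at hneg; obtain ⟨c, hc, hce⟩ := hneg; exact ⟨c, hc, hce⟩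
  -- u, v ∈ C
  have hmemC : ∀ c : X, c ∈ C → p + ε • (c - p) ∈ C := by
    intro c hc
    have h := hC hc hp hε0.le h1ε.le (by ring)
    have : ε • c + (1 - ε) • p = p + ε • (c - p) := by module
    rwa [this] at h
  have huC : u ∈ C := hu' ▸ hmemC c₁ hc₁
  have hvC : v ∈ C := hv' ▸ hmemC c₂ hc₂
  -- lower bound : φ p - φ v ≤ ε * M
  have hlow : φ p - φ v ≤ ε * M := by
    set v₂ := p + ε • (c₂' - p) with hv₂
    have hv₂C : v₂ ∈ C := hmemC c₂' hc₂'
    have hmid : (1/2 : ℝ) • v + (1/2 : ℝ) • v₂ = p := by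
      rw [hv', hv₂, hc₂'e]; module
    have h₁ : φ ((1/2 : ℝ) • v + (1/2 : ℝ) • v₂) ≤ (1/2) * φ v + (1/2) * φ v₂ :=
      hφ.2 (hCS hvC) (hCS hv₂C) (by norm_num) (by norm_num) (by norm_num)
    rw [hmid] at h₁
    have h₂ : φ v₂ ≤ ε * φ c₂' + (1 - ε) * φ p := by
      have h := hφ.2 (hCS hc₂') (hCS hp) hε0.le h1ε.le (by ring)
      have he : ε • c₂' + (1 - ε) • p = v₂ := by rw [hv₂]; module
      rwa [he] at h
    have h₃ : φ c₂' - φ p ≤ M := hM c₂' hc₂'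
    nlinarith [mul_le_mul_of_nonneg_left h₃ hε0.le]
  -- step bound for each admissible t
  have hstep : ∀ t : ℝ, 0 < t → u - v ∈ t • (C - {p}) →
      φ u - φ v ≤ M * ((1 + ε) / (1 - ε)) * t := by
    intro t ht hmem
    obtain ⟨w₀, hw₀, hw₀e⟩ := hmem
    obtain ⟨c₀, hc₀, rfl⟩ : ∃ c ∈ C, c - p = w₀ := by
      rw [Set.sub_singleton] at hw₀; obtain ⟨c, hc, rfl⟩ := hw₀; exact ⟨c, hc, rfl⟩
    set z := ε • c₁ + (1 - ε) • c₀ with hz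
    have hzC : z ∈ C := hC hc₁ hc₀ hε0.le h1ε.le (by ring)
    have htt : (0:ℝ) < t + 1 - ε := by linarith
    set a := t / (t + 1 - ε) with ha
    set b := (1 - ε) / (t + 1 - ε) with hb
    have hab : a + b = 1 := by rw [ha, hb]; field_simp; ring
    have ha0 : 0 ≤ a := div_nonneg ht.le htt.le
    have hb0 : 0 ≤ b := div_nonneg h1ε.le htt.le
    have hw₀e' : t • (c₀ - p) = u - v := hw₀e
    have hveq : v = p + ε • (c₁ - p) - t • (c₀ - p) := by
      rw [← hu', hw₀e']; abel
    have hcomb : a • z + b • v = u := by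
      rw [hz, hveq, hu']
      match_scalars <;> (simp only [ha, hb]; field_simp; ring)
    have hconv : φ (a • z + b • v) ≤ a * φ z + b * φ v :=
      hφ.2 (hCS hzC) (hCS hvC) ha0 hb0 hab
    rw [hcomb] at hconv
    have hz_ub : φ z - φ p ≤ M := hM z hzC
    -- φ u - φ v ≤ a * (φ z - φ v) ≤ a * (1+ε) * M
    have key : φ u - φ v ≤ a * ((1 + ε) * M) := by
      have hba : b - 1 = -a := by linarith
      have heq : a * φ z + b * φ v - φ v = a * (φ z - φ v) := by
        linear_combination φ v * hba
      have h1 : φ u - φ v ≤ a * (φ z - φ v) := by linarith [hconv, heq]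
      have h2 : φ z - φ v ≤ (1 + ε) * M := by linarith
      calc φ u - φ v ≤ a * (φ z - φ v) := h1
        _ ≤ a * ((1 + ε) * M) := mul_le_mul_of_nonneg_left h2 ha0
    have hA : a ≤ t / (1 - ε) := by
      rw [ha]
      exact div_le_div_of_nonneg_left ht.le h1ε (by linarith)
    have hfin : a * ((1 + ε) * M) ≤ M * ((1 + ε) / (1 - ε)) * t :=
      calc a * ((1 + ε) * M) ≤ (t / (1 - ε)) * ((1 + ε) * M) :=
            mul_le_mul_of_nonneg_right hA (by positivity)
        _ = M * ((1 + ε) / (1 - ε)) * t := by ring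
    linarith
  -- nonemptiness: u - v ∈ (2ε) • D
  have hD : Convex ℝ (C - {p}) := hC.sub (convex_singleton p)
  have hmem2ε : u - v ∈ (2 * ε) • (C - {p}) := by
    have hmidD : (1/2 : ℝ) • (c₁ - p) + (1/2 : ℝ) • (-(c₂ - p)) ∈ C - {p} :=
      hD (by rw [Set.sub_singleton]; exact ⟨c₁, hc₁, rfl⟩) hneg (by norm_num)
        (by norm_num) (by norm_num)
    refine ⟨_, hmidD, ?_⟩
    show (2 * ε) • ((1/2 : ℝ) • (c₁ - p) + (1/2 : ℝ) • (-(c₂ - p))) = u - v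
    have h2e : (2 * ε) • ((1/2 : ℝ) • (c₁ - p) + (1/2 : ℝ) • (-(c₂ - p)))
        = ε • (c₁ - p) - ε • (c₂ - p) := by module
    rw [h2e, hw₁e', hw₂e']; abel
  -- conclude via gauge = sInf
  rcases eq_or_lt_of_le hM0 with hMeq | hMpos
  · have := hstep (2 * ε) (by linarith) hmem2ε
    rw [← hMeq] at this ⊢
    simpa using this
  · set K := M * ((1 + ε) / (1 - ε)) with hK
    have hKpos : 0 < K := by
      apply mul_pos hMpos
      apply div_pos (by linarith) h1ε
    rw [gauge_def, ← div_le_iff₀' hKpos]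
    refine le_csInf ⟨2 * ε, Set.mem_Ioi.mpr (by linarith), hmem2ε⟩ ?_
    rintro r ⟨hr0, hrmem⟩
    rw [div_le_iff₀' hKpos]
    exact hstep r (Set.mem_Ioi.mp hr0) hrmem

theorem stmt_5 (S : Set X) (hSne : S.Nonempty) (hS : Convex ℝ S)
    (φ : X → ℝ) (hφ : ConvexOn ℝ S φ)
    (C : Set X) (hCS : C ⊆ S) (hC : Convex ℝ C) (p : X) (hp : p ∈ C)
    (hsym : C - {p} = -(C - {p}))
    (M : ℝ) (hM : ∀ x ∈ C, φ x - φ p ≤ M) :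
    ∀ ε : ℝ, 0 < ε → ε < 1 →
      ∀ u ∈ ε • (C - {p}) + {p}, ∀ v ∈ ε • (C - {p}) + {p},
        |φ u - φ v| ≤ M * ((1 + ε) / (1 - ε)) * gauge (C - {p}) (u - v) := by
  intro ε hε0 hε1 u hu v hv
  rw [Set.add_singleton] at hu hv
  obtain ⟨y, hy, rfl⟩ := hu
  obtain ⟨w, hw, rfl⟩ := hv
  have hy' : (y + p) - p ∈ ε • (C - {p}) := by simpa using hy
  have hw' : (w + p) - p ∈ ε • (C - {p}) := by simpa using hw
  have hsymm : ∀ x ∈ C - {p}, -x ∈ C - {p} := by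
    intro x hx; rw [hsym]; exact Set.neg_mem_neg.mpr hx
  rw [abs_sub_le_iff]
  constructor
  · exact one_sided S hS φ hφ C hCS hC p hp hsym M hM ε hε0 hε1 _ _ hy' hw'
  · have h := one_sided S hS φ hφ C hCS hC p hp hsym M hM ε hε0 hε1 _ _ hw' hy'
    rwa [show (w + p) - (y + p) = -((y + p) - (w + p)) by abel,
      gauge_neg hsymm] at h
end

section
/- Let S be a convex subset of a real vector space with icr S ≠ ∅, φ : S → ℝ convex, and C ⊆ S a convex set symmetric with respect to a point p ∈ C such that φ|_C is bounded above. Let μ be the Minkowski functional of C − p. Then φ is locally μ-Lipschitz on icr S: for every x ∈ icr S there exist ε > 0 and L > 0 such that ε(C − p) + x ⊆ S and |φ(u) − φ(v)| ≤ L·μ(u − v) for all u, v ∈ ε(C − p) + x. -/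
open Pointwise

variable {X : Type*} [AddCommGroup X] [Module ℝ X]

/-- The relative algebraic interior of a set `S`. -/
def icr (S : Set X) : Set X :=
  {x | x ∈ S ∧ ∀ y ∈ Submodule.span ℝ (S - S), ∃ t : ℝ, 0 < t ∧ x + t • y ∈ S}

theorem stmt_6 (S : Set X) (hS : Convex ℝ S) (hicr : (icr S).Nonempty)
    (φ : X → ℝ) (hφ : ConvexOn ℝ S φ)
    (C : Set X) (hCS : C ⊆ S) (hC : Convex ℝ C) (p : X) (hp : p ∈ C)
    (hsym : C - {p} = -(C - {p}))
    (hbdd : ∃ M : ℝ, ∀ x ∈ C, φ x ≤ M) :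
    ∀ x ∈ icr S, ∃ ε : ℝ, 0 < ε ∧ ∃ L : ℝ, 0 < L ∧
      ε • (C - {p}) + {x} ⊆ S ∧
      ∀ u ∈ ε • (C - {p}) + {x}, ∀ v ∈ ε • (C - {p}) + {x},
        |φ u - φ v| ≤ L * gauge (C - {p}) (u - v) := by
  obtain ⟨M, hM⟩ := hbdd
  intro x hx
  obtain ⟨hxS, hdir⟩ := hx
  have hpS : p ∈ S := hCS hp
  set D : Set X := C - {p} with hD
  -- basic facts about D
  have hmemD : ∀ d ∈ D, p + d ∈ C := by
    intro d hd
    obtain ⟨c, hc, e, he, rfl⟩ := hd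
    simp only [Set.mem_singleton_iff] at he
    subst he
    simpa using hc
  have h0D : (0 : X) ∈ D := ⟨p, hp, p, rfl, by simp⟩
  have hDconv : Convex ℝ D := hC.sub (convex_singleton p)
  have hDsym : ∀ d ∈ D, -d ∈ D := by
    intro d hd
    have hd' : d ∈ -D := by rw [← hsym]; exact hd
    simpa using hd'
  have hmid : ∀ d₁ ∈ D, ∀ d₂ ∈ D, (1/2 : ℝ) • d₁ + (1/2 : ℝ) • d₂ ∈ D := by
    intro d₁ h₁ d₂ h₂
    exact hDconv h₁ h₂ (by norm_num) (by norm_num) (by norm_num)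
  clear_value D
  -- get the point q in direction x - p
  have hspan : x - p ∈ Submodule.span ℝ (S - S) :=
    Submodule.subset_span ⟨x, hxS, p, hpS, rfl⟩
  obtain ⟨t, ht, hqS⟩ := hdir _ hspan
  set q : X := x + t • (x - p) with hq
  have h1t : (0:ℝ) < 1 + t := by linarith
  have h1t' : (1 + t : ℝ) ≠ 0 := h1t.ne'
  set a : ℝ := 1 / (1 + t) with ha
  set b : ℝ := t / (1 + t) with hb
  have ha0 : 0 < a := by positivity
  have hb0 : 0 < b := by positivity
  have hab : a + b = 1 := by rw [ha, hb]; field_simp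
  -- key decomposition
  have hdecomp : ∀ d : X, x + b • d = a • q + b • (p + d) := by
    intro d
    rw [hq, ha, hb]
    match_scalars <;> field_simp <;> ring
  clear_value q a b
  -- x + b • d ∈ S and upper bound for d ∈ D
  set M' : ℝ := a * φ q + b * M with hM'
  clear_value M'
  have hupper : ∀ d ∈ D, x + b • d ∈ S ∧ φ (x + b • d) ≤ M' := by
    intro d hd
    have hcC : p + d ∈ C := hmemD d hd
    have hmem : a • q + b • (p + d) ∈ S := hS hqS (hCS hcC) ha0.le hb0.le hab
    have hconv := hφ.2 hqS (hCS hcC) ha0.le hb0.le hab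
    simp only [smul_eq_mul] at hconv
    rw [← hdecomp d] at hmem hconv
    refine ⟨hmem, hconv.trans ?_⟩
    have := hM (p + d) hcC
    nlinarith
  have hxM' : φ x ≤ M' := by
    have h := (hupper 0 h0D).2
    rw [smul_zero, add_zero] at h
    exact h
  -- lower bound
  set m : ℝ := 2 * φ x - M' with hm
  clear_value m
  have hlower : ∀ d ∈ D, m ≤ φ (x + b • d) := by
    intro d hd
    have hnd := hDsym d hd
    have h₁ := hupper d hd
    have h₂ := hupper (-d) hnd
    have hx' : x = (1/2 : ℝ) • (x + b • d) + (1/2 : ℝ) • (x + b • (-d)) := by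
      match_scalars <;> ring
    have hconv := hφ.2 h₁.1 h₂.1 (by norm_num : (0:ℝ) ≤ 1/2)
      (by norm_num : (0:ℝ) ≤ 1/2) (by norm_num : (1/2 : ℝ) + 1/2 = 1)
    rw [← hx'] at hconv
    simp only [smul_eq_mul] at hconv
    have := h₂.2
    rw [hm]
    linarith
  -- choose ε and L
  set ε : ℝ := b / 2 with hε
  clear_value ε
  have hε0 : 0 < ε := by rw [hε]; exact half_pos hb0
  have hMm : 0 ≤ M' - m := by rw [hm]; linarith
  set L0 : ℝ := (M' - m) / ε with hL0
  clear_value L0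
  have hL00 : 0 ≤ L0 := by rw [hL0]; exact div_nonneg hMm hε0.le
  have hL1 : (0:ℝ) < L0 + 1 := by linarith
  -- half trick
  have hhalf : ∀ d : X, ε • d + x = x + b • ((1/2 : ℝ) • d + (1/2 : ℝ) • (0:X)) := by
    intro d
    simp only [smul_zero, add_zero]
    rw [hε]
    match_scalars <;> ring
  -- membership description
  have hmemE : ∀ w, w ∈ ε • D + ({x} : Set X) → ∃ d ∈ D, w = ε • d + x := by
    intro w hw
    obtain ⟨w', hw', x', hx', rfl⟩ := hw
    obtain ⟨d, hd, rfl⟩ := hw'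
    rw [Set.mem_singleton_iff] at hx'
    exact ⟨d, hd, by rw [hx']⟩
  refine ⟨ε, hε0, L0 + 1, hL1, ?_, ?_⟩
  · intro w hw
    obtain ⟨d, hd, hweq⟩ := hmemE w hw
    rw [hweq, hhalf d]
    exact (hupper _ (hmid d hd 0 h0D)).1
  · -- key estimate
    have key : ∀ e₁ ∈ D, ∀ e₂ ∈ D, ∀ s : ℝ, 0 < s →
        (ε • e₁ + x) - (ε • e₂ + x) ∈ s • D →
        φ (ε • e₁ + x) - φ (ε • e₂ + x) ≤ L0 * s := by
      intro e₁ he₁ e₂ he₂ s hs hsd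
      obtain ⟨d, hd, hdeq⟩ := hsd
      have hdeq' : s • d = (ε • e₁ + x) - (ε • e₂ + x) := hdeq
      have h1 : (ε / s) • ((ε • e₁ + x) - (ε • e₂ + x)) = ε • d := by
        rw [← hdeq', smul_smul]
        congr 1
        field_simp
      have hzeq : (ε • e₁ + x) + (ε / s) • ((ε • e₁ + x) - (ε • e₂ + x))
          = x + b • ((1/2 : ℝ) • e₁ + (1/2 : ℝ) • d) := by
        rw [h1, hε]
        match_scalars <;> ring
      have hzS : ((ε • e₁ + x) + (ε / s) • ((ε • e₁ + x) - (ε • e₂ + x))) ∈ S ∧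
          φ ((ε • e₁ + x) + (ε / s) • ((ε • e₁ + x) - (ε • e₂ + x))) ≤ M' := by
        rw [hzeq]
        exact hupper _ (hmid _ he₁ _ hd)
      have hvS : (ε • e₂ + x) ∈ S ∧ m ≤ φ (ε • e₂ + x) := by
        rw [hhalf e₂]
        exact ⟨(hupper _ (hmid _ he₂ 0 h0D)).1, hlower _ (hmid _ he₂ 0 h0D)⟩
      have hsε : (0:ℝ) < s + ε := by linarith
      have hsne : s ≠ 0 := hs.ne'
      have hsεne : s + ε ≠ 0 := hsε.ne'
      have hcomb : (ε • e₁ + x) = (s / (s + ε)) • ((ε • e₁ + x) + (ε / s) • ((ε • e₁ + x) - (ε • e₂ + x)))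
          + (ε / (s + ε)) • (ε • e₂ + x) := by
        match_scalars <;> field_simp <;> ring
      have hca : (0:ℝ) ≤ s / (s + ε) := div_nonneg hs.le hsε.le
      have hcb : (0:ℝ) ≤ ε / (s + ε) := div_nonneg hε0.le hsε.le
      have hcab : s / (s + ε) + ε / (s + ε) = 1 := by field_simp
      have hconv := hφ.2 hzS.1 hvS.1 hca hcb hcab
      rw [← hcomb] at hconv
      simp only [smul_eq_mul] at hconv
      have hc2 : ε / (s + ε) = 1 - s / (s + ε) := by linarith
      have h2 : (ε / (s + ε)) * φ (ε • e₂ + x)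
          = φ (ε • e₂ + x) - (s / (s + ε)) * φ (ε • e₂ + x) := by rw [hc2]; ring
      have hstep1 : φ (ε • e₁ + x) - φ (ε • e₂ + x)
          ≤ (s / (s + ε)) * (φ ((ε • e₁ + x) + (ε / s) • ((ε • e₁ + x) - (ε • e₂ + x)))
            - φ (ε • e₂ + x)) := by nlinarith [hconv, h2]
      have hzv : φ ((ε • e₁ + x) + (ε / s) • ((ε • e₁ + x) - (ε • e₂ + x)))
          - φ (ε • e₂ + x) ≤ M' - m := by linarith [hzS.2, hvS.2]
      have hss : s / (s + ε) ≤ s / ε :=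
        div_le_div_of_nonneg_left hs.le hε0 (by linarith)
      have hstep2 : (s / (s + ε)) * (φ ((ε • e₁ + x) + (ε / s) • ((ε • e₁ + x) - (ε • e₂ + x)))
          - φ (ε • e₂ + x)) ≤ (s / ε) * (M' - m) := by
        exact (mul_le_mul_of_nonneg_left hzv hca).trans
          (mul_le_mul_of_nonneg_right hss hMm)
      have heq : (s / ε) * (M' - m) = L0 * s := by rw [hL0]; ring
      linarith
    -- conclude
    intro u hu v hv
    obtain ⟨d₁, hd₁, rfl⟩ := hmemE u hu
    obtain ⟨d₂, hd₂, rfl⟩ := hmemE v hv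
    have habs : ∀ s : ℝ, 0 < s → (ε • d₁ + x) - (ε • d₂ + x) ∈ s • D →
        |φ (ε • d₁ + x) - φ (ε • d₂ + x)| / (L0 + 1) ≤ s := by
      intro s hs hsd
      have h1 := key d₁ hd₁ d₂ hd₂ s hs hsd
      have hsd' : (ε • d₂ + x) - (ε • d₁ + x) ∈ s • D := by
        obtain ⟨d, hd, hdeq⟩ := hsd
        have hdeq' : s • d = (ε • d₁ + x) - (ε • d₂ + x) := hdeq
        refine ⟨-d, hDsym d hd, ?_⟩
        show s • (-d) = _
        rw [smul_neg, hdeq']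
        abel
      have h2 := key d₂ hd₂ d₁ hd₁ s hs hsd'
      rw [div_le_iff₀ hL1, abs_le]
      constructor <;> linarith [hs.le]
    have hne : ({r ∈ Set.Ioi (0:ℝ) | (ε • d₁ + x) - (ε • d₂ + x) ∈ r • D}).Nonempty := by
      refine ⟨b, hb0, ⟨(1/2 : ℝ) • d₁ + (1/2 : ℝ) • (-d₂), hmid d₁ hd₁ (-d₂) (hDsym d₂ hd₂), ?_⟩⟩
      show b • _ = _
      rw [hε]
      match_scalars <;> ring
    have hgauge : |φ (ε • d₁ + x) - φ (ε • d₂ + x)| / (L0 + 1)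
        ≤ gauge D ((ε • d₁ + x) - (ε • d₂ + x)) := by
      rw [gauge_def]
      refine le_csInf hne ?_
      rintro s ⟨hs, hsd⟩
      exact habs s hs hsd
    rw [div_le_iff₀ hL1] at hgauge
    calc |φ (ε • d₁ + x) - φ (ε • d₂ + x)|
        ≤ gauge D ((ε • d₁ + x) - (ε • d₂ + x)) * (L0 + 1) := hgauge
      _ = (L0 + 1) * gauge D ((ε • d₁ + x) - (ε • d₂ + x)) := by ring
end

section
/- Let C be a convex set symmetric with respect to x₀ ∈ C, μ the Minkowski functional of C − x₀, and φ : C → ℝ μ-Lipschitz with constant L. Suppose there exist ε > 0 and u ∈ C with ε(C − x₀) + u ⊆ C such that the restriction of φ to ε(C − x₀) + u attains a minimum at u. Then φ°(u, v) ≥ 0 for all v ∈ span(C − x₀), where φ°(u,v) := limsup_{μ(y−u)→0, t→0+} (φ(y+tv) − φ(y))/t. -/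
open Pointwise Filter

variable {X : Type*} [AddCommGroup X] [Module ℝ X]

/-- Clarke-type generalized directional derivative of `φ` (defined on `C`) at `x` in
direction `v`, where the base point `y ∈ C` converges to `x` with respect to the
Minkowski-type functional `μ` and `t → 0+`. -/
noncomputable def gdd (μ : X → ℝ) (C : Set X) (φ : X → ℝ) (x v : X) : ℝ :=
  Filter.limsup (fun p : X × ℝ => (φ (p.1 + p.2 • v) - φ p.1) / p.2)
    (((Filter.comap (fun y => μ (y - x)) (nhds 0)) ⊓ Filter.principal C) ×ˢ
      nhdsWithin 0 (Set.Ioi 0))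

/-- The open unit ball centred at `x₀` for the Minkowski functional of `C - x₀`,
inside the affine subspace `x₀ + span (C - x₀)`. -/
def ballMu (C : Set X) (x₀ : X) : Set X :=
  {x | x - x₀ ∈ Submodule.span ℝ (C - {x₀}) ∧ gauge (C - {x₀}) (x - x₀) < 1}

theorem stmt_10 (C : Set X) (hC : Convex ℝ C) (x₀ : X) (hx₀ : x₀ ∈ C)
    (hsym : C - {x₀} = -(C - {x₀})) (φ : X → ℝ) (L : ℝ) (hL : 0 < L)
    (hLip : ∀ u ∈ C, ∀ v ∈ C, |φ u - φ v| ≤ L * gauge (C - {x₀}) (u - v))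
    (ε : ℝ) (hε : 0 < ε) (u : X) (hu : u ∈ C)
    (hsub : ε • (C - {x₀}) + {u} ⊆ C)
    (hmin : ∀ w ∈ ε • (C - {x₀}) + {u}, φ u ≤ φ w) :
    ∀ v ∈ Submodule.span ℝ (C - {x₀}), 0 ≤ gdd (gauge (C - {x₀})) C φ u v := by
  intro v hv
  set D : Set X := C - {x₀} with hDdef
  have h0D : (0 : X) ∈ D := by
    have : x₀ - x₀ ∈ D := Set.sub_mem_sub hx₀ rfl
    simpa using this
  have hconv : Convex ℝ D := hC.sub (convex_singleton x₀)
  have hdown : ∀ x ∈ D, ∀ c : ℝ, 0 ≤ c → c ≤ 1 → c • x ∈ D := by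
    intro x hx c hc hc1
    have := hconv hx h0D hc (by linarith : (0:ℝ) ≤ 1 - c) (by ring)
    simpa using this
  have hcombo : ∀ x ∈ D, ∀ y ∈ D, ∀ a b : ℝ, 0 ≤ a → 0 ≤ b → a + b ≤ 1 →
      a • x + b • y ∈ D := by
    intro x hx y hy a b ha hb hab
    by_cases h : a + b = 0
    · have ha0 : a = 0 := by linarith
      have hb0 : b = 0 := by linarith
      simpa [ha0, hb0] using h0D
    · have hc : 0 < a + b := lt_of_le_of_ne (add_nonneg ha hb) (Ne.symm h)
      have hw : (a/(a+b)) • x + (b/(a+b)) • y ∈ D :=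
        hconv hx hy (div_nonneg ha hc.le) (div_nonneg hb hc.le) (by field_simp)
      have hkey := hdown _ hw (a+b) hc.le hab
      have e : (a+b) • ((a/(a+b)) • x + (b/(a+b)) • y) = a • x + b • y := by
        rw [smul_add, smul_smul, smul_smul]
        congr 1 <;> congr 1 <;> field_simp
      rwa [e] at hkey
  have habs : ∀ w ∈ Submodule.span ℝ D, ∃ r : ℝ, 0 < r ∧ r • w ∈ D := by
    intro w hw
    induction hw using Submodule.span_induction with
    | mem x hx => exact ⟨1, one_pos, by simpa using hx⟩
    | zero => exact ⟨1, one_pos, by simpa using h0D⟩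
    | add x y hx hy ihx ihy =>
        obtain ⟨r₁, hr₁, h₁⟩ := ihx
        obtain ⟨r₂, hr₂, h₂⟩ := ihy
        refine ⟨min r₁ r₂ / 2, by positivity, ?_⟩
        set r := min r₁ r₂ / 2 with hrdef
        have hrle₁ : r ≤ r₁ / 2 := by
          have := min_le_left r₁ r₂; rw [hrdef]; linarith
        have hrle₂ : r ≤ r₂ / 2 := by
          have := min_le_right r₁ r₂; rw [hrdef]; linarith
        have hd₁ : r / r₁ ≤ 1/2 := by rw [div_le_iff₀ hr₁]; linarith
        have hd₂ : r / r₂ ≤ 1/2 := by rw [div_le_iff₀ hr₂]; linarith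
        have hr : 0 < r := by positivity
        have key := hcombo _ h₁ _ h₂ (r/r₁) (r/r₂)
          (by positivity) (by positivity) (by linarith)
        have e : (r/r₁) • (r₁ • x) + (r/r₂) • (r₂ • y) = r • (x + y) := by
          rw [smul_add, smul_smul, smul_smul, div_mul_cancel₀ _ hr₁.ne',
            div_mul_cancel₀ _ hr₂.ne']
        rwa [e] at key
    | smul a x hx ih =>
        obtain ⟨r, hr, h⟩ := ih
        rcases lt_trichotomy a 0 with h1 | h1 | h1
        · have hna : (0:ℝ) < -a := neg_pos.2 h1
          refine ⟨r / (-a), div_pos hr hna, ?_⟩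
          have e : (r / (-a)) • (a • x) = -(r • x) := by
            rw [smul_smul, ← neg_smul]
            congr 1
            calc r / (-a) * a = -(r / (-a) * (-a)) := by ring
              _ = -r := by rw [div_mul_cancel₀ _ hna.ne']
          rw [e, hsym, Set.mem_neg, neg_neg]
          exact h
        · exact ⟨1, one_pos, by simpa [h1] using h0D⟩
        · refine ⟨r / a, by positivity, ?_⟩
          rw [smul_smul, div_mul_cancel₀ _ h1.ne']
          exact h
  obtain ⟨r, hr, hrv⟩ := habs v hv
  have hsmall : ∀ c : ℝ, 0 < c → c ≤ r → c • v ∈ D := by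
    intro c hc hcr
    have e : c • v = (c/r) • (r • v) := by rw [smul_smul, div_mul_cancel₀ _ hr.ne']
    rw [e]
    exact hdown _ hrv _ (by positivity) ((div_le_one hr).2 hcr)
  have hmem : ∀ t : ℝ, 0 < t → t ≤ ε * r → u + t • v ∈ ε • D + {u} := by
    intro t ht htr
    have h1 : (t/ε) • v ∈ D := by
      refine hsmall _ (by positivity) ((div_le_iff₀ hε).2 ?_)
      calc t ≤ ε * r := htr
        _ = r * ε := mul_comm _ _
    have h2 : t • v ∈ ε • D := by
      have := Set.smul_mem_smul_set (a := ε) h1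
      rwa [smul_smul, mul_div_cancel₀ _ hε.ne'] at this
    have := Set.add_mem_add h2 (Set.mem_singleton u)
    simpa [add_comm] using this
  have hq : ∀ t : ℝ, 0 < t → t ≤ ε * r → 0 ≤ (φ (u + t • v) - φ u) / t := by
    intro t ht htr
    exact div_nonneg (sub_nonneg.2 (hmin _ (hmem t ht htr))) ht.le
  have hfreq : ∃ᶠ p : X × ℝ in
      (((Filter.comap (fun y => gauge (C - {x₀}) (y - u)) (nhds 0)) ⊓
        Filter.principal C) ×ˢ nhdsWithin 0 (Set.Ioi 0)),
      0 ≤ (φ (p.1 + p.2 • v) - φ p.1) / p.2 := by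
    rw [Filter.frequently_iff]
    intro s hs
    rw [Filter.mem_prod_iff] at hs
    obtain ⟨t₁, ht₁, t₂, ht₂, hsub'⟩ := hs
    have hu1 : u ∈ t₁ := by
      rw [Filter.mem_inf_iff] at ht₁
      obtain ⟨A, hA, B, hB, rfl⟩ := ht₁
      constructor
      · obtain ⟨V, hV, hAV⟩ := Filter.mem_comap.1 hA
        apply hAV
        simpa [gauge_zero] using mem_of_mem_nhds hV
      · exact (Filter.mem_principal.1 hB) hu
    have hex : ∃ t : ℝ, 0 < t ∧ t ∈ t₂ ∧ t ≤ ε * r := by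
      rw [mem_nhdsWithin] at ht₂
      obtain ⟨V, hVopen, hV0, hVsub⟩ := ht₂
      obtain ⟨δ, hδ, hball⟩ := Metric.isOpen_iff.1 hVopen 0 hV0
      refine ⟨min (δ/2) (ε*r), by positivity, ?_, min_le_right _ _⟩
      refine hVsub ⟨hball ?_, Set.mem_Ioi.2 (by positivity)⟩
      rw [Metric.mem_ball, dist_zero_right, Real.norm_eq_abs,
        abs_of_pos (by positivity)]
      exact lt_of_le_of_lt (min_le_left _ _) (by linarith)
    obtain ⟨t, ht, htmem, htr⟩ := hex
    exact ⟨(u, t), hsub' (Set.mk_mem_prod hu1 htmem), hq t ht htr⟩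
  rw [gdd, Filter.limsup_eq]
  apply Real.sInf_nonneg
  intro a ha
  obtain ⟨p, hp0, hpa⟩ := (hfreq.and_eventually ha).exists
  exact le_trans hp0 hpa
end

section
/- Let φ(x) := ∫₀¹ (x(t) − t)²/t dt for x ∈ L∞[0,1] with x ≥ −1 a.e. and ∫₀¹ (x(t)−t)²/t dt < ∞, and let S be the set of such x. Then the identity function f(t) = t belongs to the relative algebraic interior icr S: for every v ∈ span S there exists ε > 0 with f + εv ∈ S. -/
open Pointwise MeasureTheory

/-- Lebesgue measure on the interval `(0, 1]`. -/
noncomputable def μ0 : Measure ℝ := volume.restrict (Set.Ioc 0 1)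

/-- The set `S` of essentially bounded functions `x` with `x ≥ −1` a.e. and
`∫₀¹ (x(t) − t)²/t dt < ∞`, viewed inside `L∞[0,1]`. -/
def Sinf : Set (Lp ℝ ⊤ μ0) :=
  {x | (∀ᵐ t ∂μ0, (-1 : ℝ) ≤ x t) ∧
    (∫⁻ t, ENNReal.ofReal ((x t - t) ^ 2 / t) ∂μ0) < ⊤}

lemma mu0_ae_mem : ∀ᵐ t ∂μ0, t ∈ Set.Ioc (0:ℝ) 1 :=
  ae_restrict_mem measurableSet_Ioc

lemma mu0_univ : μ0 Set.univ = 1 := by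
  simp [μ0, Real.volume_Ioc]

/-- The key integrability predicate. -/
def P (v : Lp ℝ ⊤ μ0) : Prop :=
  (∫⁻ t, ENNReal.ofReal ((v t) ^ 2 / t) ∂μ0) < ⊤

lemma aemeas_aux (g : ℝ → ℝ) (hg : AEMeasurable g μ0) :
    AEMeasurable (fun t => ENNReal.ofReal ((g t) ^ 2 / t)) μ0 :=
  ENNReal.measurable_ofReal.comp_aemeasurable
    (((hg.pow_const 2).div measurable_id.aemeasurable))

lemma pointwise_sq (a b t : ℝ) (ht : 0 < t) :
    ENNReal.ofReal ((a + b) ^ 2 / t) ≤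
      2 * ENNReal.ofReal (a ^ 2 / t) + 2 * ENNReal.ofReal (b ^ 2 / t) := by
  have h1 : (a + b) ^ 2 / t ≤ 2 * (a ^ 2 / t) + 2 * (b ^ 2 / t) := by
    have hsq : (a + b) ^ 2 ≤ 2 * a ^ 2 + 2 * b ^ 2 := by nlinarith [sq_nonneg (a - b)]
    calc (a + b) ^ 2 / t ≤ (2 * a ^ 2 + 2 * b ^ 2) / t := by gcongr
      _ = 2 * (a ^ 2 / t) + 2 * (b ^ 2 / t) := by ring
  calc ENNReal.ofReal ((a + b) ^ 2 / t)
      ≤ ENNReal.ofReal (2 * (a ^ 2 / t) + 2 * (b ^ 2 / t)) := ENNReal.ofReal_le_ofReal h1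
    _ ≤ ENNReal.ofReal (2 * (a ^ 2 / t)) + ENNReal.ofReal (2 * (b ^ 2 / t)) :=
        ENNReal.ofReal_add_le
    _ = 2 * ENNReal.ofReal (a ^ 2 / t) + 2 * ENNReal.ofReal (b ^ 2 / t) := by
        rw [ENNReal.ofReal_mul (by norm_num), ENNReal.ofReal_mul (by norm_num)]
        norm_num

lemma P_congr {v : Lp ℝ ⊤ μ0} {g : ℝ → ℝ} (h : ∀ᵐ t ∂μ0, v t = g t)
    (hP : (∫⁻ t, ENNReal.ofReal ((g t) ^ 2 / t) ∂μ0) < ⊤) : P v := by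
  unfold P
  rwa [lintegral_congr_ae (h.mono fun t ht => by rw [ht])]

lemma P_add_aux {g h : ℝ → ℝ} (hg : AEMeasurable g μ0) (hh : AEMeasurable h μ0)
    (h1 : (∫⁻ t, ENNReal.ofReal ((g t) ^ 2 / t) ∂μ0) < ⊤)
    (h2 : (∫⁻ t, ENNReal.ofReal ((h t) ^ 2 / t) ∂μ0) < ⊤) :
    (∫⁻ t, ENNReal.ofReal ((g t + h t) ^ 2 / t) ∂μ0) < ⊤ := by
  have hb : (∫⁻ t, ENNReal.ofReal ((g t + h t) ^ 2 / t) ∂μ0) ≤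
      ∫⁻ t, 2 * ENNReal.ofReal ((g t) ^ 2 / t) + 2 * ENNReal.ofReal ((h t) ^ 2 / t) ∂μ0 := by
    refine lintegral_mono_ae (mu0_ae_mem.mono fun t ht => ?_)
    exact pointwise_sq _ _ _ ht.1
  refine hb.trans_lt ?_
  rw [lintegral_add_left' ((aemeas_aux g hg).const_mul 2) _,
    lintegral_const_mul' _ _ (by norm_num), lintegral_const_mul' _ _ (by norm_num)]
  exact ENNReal.add_lt_top.mpr ⟨ENNReal.mul_lt_top (by norm_num) h1,
    ENNReal.mul_lt_top (by norm_num) h2⟩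

lemma P_id : (∫⁻ (t : ℝ), ENNReal.ofReal ((t) ^ 2 / t) ∂μ0) < ⊤ := by
  have hb : (∫⁻ (t : ℝ), ENNReal.ofReal ((t) ^ 2 / t) ∂μ0) ≤ ∫⁻ _, 1 ∂μ0 := by
    refine lintegral_mono_ae (mu0_ae_mem.mono fun t ht => ?_)
    have : t ^ 2 / t ≤ 1 := by
      rw [sq, mul_div_assoc, div_self ht.1.ne']
      simpa using ht.2
    simpa using ENNReal.ofReal_le_ofReal this
  refine hb.trans_lt ?_
  rw [lintegral_const, mu0_univ]
  norm_num

lemma P_smul_aux (c : ℝ) {g : ℝ → ℝ}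
    (h1 : (∫⁻ t, ENNReal.ofReal ((g t) ^ 2 / t) ∂μ0) < ⊤) :
    (∫⁻ t, ENNReal.ofReal ((c * g t) ^ 2 / t) ∂μ0) < ⊤ := by
  have heq : ∀ t : ℝ, ENNReal.ofReal ((c * g t) ^ 2 / t) =
      ENNReal.ofReal (c ^ 2) * ENNReal.ofReal ((g t) ^ 2 / t) := by
    intro t
    rw [← ENNReal.ofReal_mul (sq_nonneg c)]
    ring_nf
  simp_rw [heq]
  rw [lintegral_const_mul' _ _ ENNReal.ofReal_ne_top]
  exact ENNReal.mul_lt_top ENNReal.ofReal_lt_top h1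

lemma P_of_mem_S {x : Lp ℝ ⊤ μ0} (hx : x ∈ Sinf) : P x := by
  unfold P
  have h : ∀ᵐ t ∂μ0, (x : ℝ → ℝ) t = (fun t => ((x : ℝ → ℝ) t - t)) t + (fun t : ℝ => t) t := by
    filter_upwards with t; ring
  refine P_congr h ?_
  exact P_add_aux ((Lp.aestronglyMeasurable x).aemeasurable.sub measurable_id.aemeasurable)
    measurable_id.aemeasurable hx.2 P_id

lemma P_span {v : Lp ℝ ⊤ μ0} (hv : v ∈ Submodule.span ℝ Sinf) : P v := by
  induction hv using Submodule.span_induction with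
  | mem x hx => exact P_of_mem_S hx
  | zero =>
      refine P_congr (g := fun _ => 0) (Lp.coeFn_zero ℝ ⊤ μ0) ?_
      simp
  | add x y hx hy hPx hPy =>
      refine P_congr (g := fun t => (x : ℝ → ℝ) t + (y : ℝ → ℝ) t) (Lp.coeFn_add x y) ?_
      exact P_add_aux (Lp.aestronglyMeasurable x).aemeasurable
        (Lp.aestronglyMeasurable y).aemeasurable hPx hPy
  | smul c x hx hPx =>
      refine P_congr (g := fun t => c * (x : ℝ → ℝ) t) ?_ (P_smul_aux c hPx)
      filter_upwards [Lp.coeFn_smul c x] with t ht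
      simpa [smul_eq_mul] using ht

theorem stmt_17 (f : Lp ℝ ⊤ μ0) (hf : ∀ᵐ t ∂μ0, f t = t) :
    f ∈ Sinf ∧ ∀ v ∈ Submodule.span ℝ Sinf, ∃ ε : ℝ, 0 < ε ∧ f + ε • v ∈ Sinf := by
  constructor
  · constructor
    · filter_upwards [hf, mu0_ae_mem] with t ht hmem
      rw [ht]; linarith [hmem.1]
    · have : (∫⁻ t, ENNReal.ofReal (((f : ℝ → ℝ) t - t) ^ 2 / t) ∂μ0) = 0 := by
        rw [← lintegral_zero (μ := μ0)]
        refine lintegral_congr_ae (hf.mono fun t ht => ?_)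
        simp [ht]
      rw [this]; exact ENNReal.zero_lt_top
  · intro v hv
    have hPv : P v := P_span hv
    -- essential bound for v
    have hvb : ∀ᵐ t ∂μ0, ‖(v : ℝ → ℝ) t‖ ≤ ‖v‖ := by
      filter_upwards [ae_le_eLpNormEssSup (f := (v : ℝ → ℝ)) (μ := μ0)] with t ht
      have h2 : eLpNormEssSup (v : ℝ → ℝ) μ0 = ENNReal.ofReal ‖v‖ := by
        rw [Lp.norm_def, ENNReal.ofReal_toReal (Lp.eLpNorm_ne_top v), eLpNorm_exponent_top]
      rw [h2] at ht
      have h3 := ENNReal.toReal_mono ENNReal.ofReal_ne_top ht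
      simpa [ENNReal.toReal_ofReal (norm_nonneg v)] using h3
    set ε : ℝ := 1 / (‖v‖ + 1) with hε
    have hnorm : (0:ℝ) ≤ ‖v‖ := norm_nonneg v
    have hεpos : 0 < ε := by positivity
    refine ⟨ε, hεpos, ?_, ?_⟩
    · filter_upwards [hf, mu0_ae_mem, hvb, Lp.coeFn_add f (ε • v), Lp.coeFn_smul ε v]
        with t ht hmem hb hadd hsmul
      have h1 : ((f + ε • v : Lp ℝ ⊤ μ0) : ℝ → ℝ) t = t + ε * (v : ℝ → ℝ) t := by
        rw [hadd, Pi.add_apply, ht, hsmul]; rfl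
      rw [h1]
      have h2 : ε * ‖v‖ ≤ 1 := by
        rw [hε, div_mul_eq_mul_div, one_mul, div_le_one (by linarith)]; linarith
      have h3 : -(ε * (v : ℝ → ℝ) t) ≤ ε * ‖v‖ := by
        rw [← mul_neg]
        exact mul_le_mul_of_nonneg_left ((neg_le_abs _).trans (le_of_eq rfl) |>.trans hb) hεpos.le
      nlinarith [hmem.1]
    · have h : ∀ᵐ t ∂μ0, ((f + ε • v : Lp ℝ ⊤ μ0) : ℝ → ℝ) t - t = ε * (v : ℝ → ℝ) t := by
        filter_upwards [hf, Lp.coeFn_add f (ε • v), Lp.coeFn_smul ε v] with t ht hadd hsmul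
        rw [hadd, Pi.add_apply, ht, hsmul]; simp [smul_eq_mul]
      have := P_smul_aux ε (g := fun t => (v : ℝ → ℝ) t) hPv
      rwa [lintegral_congr_ae (h.mono fun t ht => by rw [ht])]
end
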